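/- Let Ψ be a maximal closed root subsystem of Φ (of any rank). The map that sends a ℚ-linear map t : Span_ℚ(Ψ) → ℂ to the point x ∈ (ℙ¹)^{Φ⁺} with x_λ = [1 : t(λ)] for λ ∈ Ψ ∩ Φ⁺ and x_λ = ∞ for λ ∈ Φ⁺ ∖ Ψ takes values in Z and is a bijection from Hom_ℚ(Span_ℚ(Ψ), ℂ) onto the stratum C̊(Ψ) := {x ∈ Z : Fin(x) = Ψ ∩ Φ⁺}. (Thus each stratum of Z is an affine space of dimension equal to the rank of Ψ.) -/

import Mathlib

open scoped Classical
noncomputable section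

/-- A reduced crystallographic root system spanning `E`. -/
def IsRootSystem {E : Type*} [AddCommGroup E] [Module ℚ E] (Φ : Set E) : Prop :=
  Φ.Finite ∧ (0 : E) ∉ Φ ∧ Submodule.span ℚ Φ = ⊤ ∧ (∀ α ∈ Φ, -α ∈ Φ) ∧
    (∀ α ∈ Φ, ∃ f : E →ₗ[ℚ] ℚ, f α = 2 ∧ (∀ β ∈ Φ, ∃ n : ℤ, f β = (n : ℚ)) ∧
      ∀ β ∈ Φ, β - f β • α ∈ Φ) ∧
    ∀ α ∈ Φ, ∀ c : ℚ, c • α ∈ Φ → c = 1 ∨ c = -1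

/-- Canonical homogeneous coordinates on `ℙ¹ = ℂ ∪ {∞}`. -/
def coordP1 : OnePoint ℂ → ℂ × ℂ :=
  fun x => Option.elim x (0, 1) fun c => (1, c)

/-- Membership in `Z`. -/
def memZ {E : Type*} [AddCommGroup E] [Module ℚ E] (Φpos : Finset E)
    (x : Φpos → OnePoint ℂ) : Prop :=
  ∀ c : Φpos → ℚ, ∑ l : Φpos, c l • (l : E) = 0 →
    ∑ l ∈ Finset.univ.filter fun l : Φpos => c l ≠ 0,
      (c l : ℂ) * (coordP1 (x l)).2 *
        ∏ m ∈ (Finset.univ.filter fun m : Φpos => c m ≠ 0).erase l, (coordP1 (x m)).1 = 0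

/-- The embedding of the Cartan subalgebra `Hom_ℚ(E, ℂ)` into `(ℙ¹)^{Φ⁺}`. -/
def embH {E : Type*} [AddCommGroup E] [Module ℚ E] (Φpos : Finset E)
    (f : E →ₗ[ℚ] ℂ) : Φpos → OnePoint ℂ :=
  fun l => ((f (l : E) : ℂ) : OnePoint ℂ)

/-- `Ψ` is a closed root subsystem of `Θ`. -/
def IsClosedSub {E : Type*} [AddCommGroup E] (Θ Ψ : Set E) : Prop :=
  Ψ ⊆ Θ ∧ (∀ l ∈ Ψ, -l ∈ Ψ) ∧ ∀ l ∈ Ψ, ∀ m ∈ Ψ, l + m ∈ Θ → l + m ∈ Ψ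

/-- The rank of a subset: the dimension of its `ℚ`-linear span. -/
def rankOf {E : Type*} [AddCommGroup E] [Module ℚ E] (Ψ : Set E) : ℕ :=
  Module.finrank ℚ (Submodule.span ℚ Ψ)

/-- `Ψ` is a maximal closed root subsystem of `Θ` of rank `m`. -/
def IsMaxClosedOfRank {E : Type*} [AddCommGroup E] [Module ℚ E] (Θ Ψ : Set E) (m : ℕ) : Prop :=
  IsClosedSub Θ Ψ ∧ rankOf Ψ = m ∧
    ∀ Ψ' : Set E, IsClosedSub Θ Ψ' → rankOf Ψ' = m → Ψ ⊆ Ψ' → Ψ' = Ψ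


/-- `Fin(x)`: the set of positive roots where `x` has a finite coordinate. -/
def finSet {E : Type*} [AddCommGroup E] [Module ℚ E] (Φpos : Finset E)
    (x : Φpos → OnePoint ℂ) : Set E :=
  {l : E | ∃ h : l ∈ Φpos, x ⟨l, h⟩ ≠ OnePoint.infty}

/-- The parametrization of the stratum attached to `Ψ`: a `ℚ`-linear map
`t : Span_ℚ(Ψ) → ℂ` goes to the point whose `λ`-coordinate is `[1 : t(λ)]` for
`λ ∈ Ψ ∩ Φ⁺` and `∞` for `λ ∈ Φ⁺ \ Ψ`. -/
def strMap {E : Type*} [AddCommGroup E] [Module ℚ E] (Φpos : Finset E) (Ψ : Set E)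
    (t : (Submodule.span ℚ Ψ) →ₗ[ℚ] ℂ) : Φpos → OnePoint ℂ :=
  fun l => if h : (l : E) ∈ Ψ then
      ((t ⟨(l : E), Submodule.subset_span h⟩ : ℂ) : OnePoint ℂ)
    else OnePoint.infty

lemma coordP1_fst_of_ne {x : OnePoint ℂ} (h : x ≠ OnePoint.infty) : (coordP1 x).1 = 1 := by
  obtain ⟨c, rfl⟩ := OnePoint.ne_infty_iff_exists.mp h
  rfl

lemma coordP1_snd_of_ne {x : OnePoint ℂ} (h : x ≠ OnePoint.infty) :
    (((coordP1 x).2 : ℂ) : OnePoint ℂ) = x := by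
  obtain ⟨c, rfl⟩ := OnePoint.ne_infty_iff_exists.mp h
  rfl

lemma sum_finite {E : Type*} [AddCommGroup E] [Module ℚ E] (Φpos : Finset E)
    (x : Φpos → OnePoint ℂ) (c : Φpos → ℚ)
    (hfin : ∀ m, c m ≠ 0 → x m ≠ OnePoint.infty) :
    (∑ l ∈ Finset.univ.filter fun l : Φpos => c l ≠ 0,
      (c l : ℂ) * (coordP1 (x l)).2 *
        ∏ m ∈ (Finset.univ.filter fun m : Φpos => c m ≠ 0).erase l, (coordP1 (x m)).1)
    = ∑ m : Φpos, (c m : ℂ) * (coordP1 (x m)).2 := by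
  have h1 : ∑ m : Φpos, (c m : ℂ) * (coordP1 (x m)).2
      = ∑ m ∈ Finset.univ.filter fun m : Φpos => c m ≠ 0, (c m : ℂ) * (coordP1 (x m)).2 :=
    (Finset.sum_filter_of_ne
      (by intro y _ hy hcy; apply hy; rw [hcy]; push_cast; ring)).symm
  rw [h1]
  apply Finset.sum_congr rfl
  intro l hl
  rw [Finset.prod_eq_one, mul_one]
  intro m hm
  exact coordP1_fst_of_ne (hfin m (Finset.mem_filter.mp (Finset.mem_of_mem_erase hm)).2)

theorem statement5 {E : Type*} [AddCommGroup E] [Module ℚ E] [FiniteDimensional ℚ E]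
    (hr : 1 ≤ Module.finrank ℚ E)
    (Φ : Set E) (hΦ : IsRootSystem Φ)
    (ℓ : E →ₗ[ℚ] ℚ) (hℓ : ∀ α ∈ Φ, ℓ α ≠ 0)
    (Φpos : Finset E) (hpos : ∀ a : E, a ∈ Φpos ↔ a ∈ Φ ∧ 0 < ℓ a)
    (Ψ : Set E) (hΨ : IsMaxClosedOfRank Φ Ψ (rankOf Ψ)) :
    (∀ t : (Submodule.span ℚ Ψ) →ₗ[ℚ] ℂ, memZ Φpos (strMap Φpos Ψ t)) ∧
    Function.Injective (strMap Φpos Ψ) ∧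
    Set.range (strMap Φpos Ψ)
      = {x : Φpos → OnePoint ℂ | memZ Φpos x ∧ finSet Φpos x = Ψ ∩ (Φpos : Set E)} := by
  classical
  obtain ⟨⟨hΨΦ, hΨneg, hΨadd⟩, -, hmax⟩ := hΨ
  obtain ⟨hΦfin, h0, -, hneg, -, -⟩ := hΦ
  -- Key lemma: maximality implies Φ ∩ span Ψ = Ψ
  have keyA : ∀ α ∈ Φ, α ∈ Submodule.span ℚ Ψ → α ∈ Ψ := by
    intro α hα hsp
    have hsub : IsClosedSub Φ (Φ ∩ (Submodule.span ℚ Ψ : Set E)) := by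
      refine ⟨Set.inter_subset_left, fun l hl => ⟨hneg l hl.1, ?_⟩,
        fun l hl m hm hsum => ⟨hsum, Submodule.add_mem _ hl.2 hm.2⟩⟩
      exact Submodule.neg_mem _ hl.2
    have hspan : Submodule.span ℚ (Φ ∩ (Submodule.span ℚ Ψ : Set E)) = Submodule.span ℚ Ψ := by
      apply le_antisymm
      · exact Submodule.span_le.mpr fun z hz => hz.2
      · exact Submodule.span_le.mpr fun z hz =>
          Submodule.subset_span ⟨hΨΦ hz, Submodule.subset_span hz⟩
    have hrank : rankOf (Φ ∩ (Submodule.span ℚ Ψ : Set E)) = rankOf Ψ := by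
      unfold rankOf; rw [hspan]
    have := hmax _ hsub hrank (fun z hz => ⟨hΨΦ hz, Submodule.subset_span hz⟩)
    rw [← this]
    exact ⟨hα, hsp⟩
  -- Part 1: strMap lands in Z
  have part1 : ∀ t : (Submodule.span ℚ Ψ) →ₗ[ℚ] ℂ, memZ Φpos (strMap Φpos Ψ t) := by
    intro t c hc
    set S := Finset.univ.filter fun l : Φpos => c l ≠ 0 with hS
    set T := S.filter fun l : Φpos => (l : E) ∉ Ψ with hT
    by_cases hT0 : T = ∅
    · -- all roots in the support lie in Ψ
      have hallΨ : ∀ m : Φpos, c m ≠ 0 → (m : E) ∈ Ψ := by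
        intro m hm
        by_contra h
        exact (Finset.notMem_empty m) (hT0 ▸ (Finset.mem_filter.mpr
          ⟨Finset.mem_filter.mpr ⟨Finset.mem_univ _, hm⟩, h⟩))
      have hfin' : ∀ m : Φpos, c m ≠ 0 → strMap Φpos Ψ t m ≠ OnePoint.infty := by
        intro m hm
        simp only [strMap, dif_pos (hallΨ m hm)]
        exact OnePoint.coe_ne_infty _
      rw [sum_finite _ _ _ hfin']
      set y : Φpos → Submodule.span ℚ Ψ := fun m =>
        if h : (m : E) ∈ Ψ then ⟨m, Submodule.subset_span h⟩ else 0 with hy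
      have hy0 : (∑ m : Φpos, c m • y m) = 0 := by
        apply Subtype.ext
        push_cast
        have heq : ∀ m ∈ (Finset.univ : Finset Φpos), c m • ((y m : E)) = c m • (m : E) := by
          intro m _
          by_cases hm : c m = 0
          · rw [hm, zero_smul, zero_smul]
          · rw [hy]; simp only [dif_pos (hallΨ m hm)]
        rw [Finset.sum_congr rfl heq]
        exact hc
      have := congrArg t hy0
      rw [map_sum, map_zero] at this
      rw [← this]
      apply Finset.sum_congr rfl
      intro m _
      by_cases hm : c m = 0
      · simp [hm]
      · rw [map_smul, Rat.smul_def]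
        congr 1
        have hxm : strMap Φpos Ψ t m = ((t ⟨(m : E), Submodule.subset_span (hallΨ m hm)⟩ : ℂ)
            : OnePoint ℂ) := by
          simp only [strMap, dif_pos (hallΨ m hm)]
        rw [hxm]
        rw [hy]
        simp only [dif_pos (hallΨ m hm)]
        rfl
    · by_cases hT1 : T.card = 1
      · -- exactly one root outside Ψ: contradiction with maximality
        exfalso
        obtain ⟨l0, hl0⟩ := Finset.card_eq_one.mp hT1
        have hl0T : l0 ∈ T := hl0 ▸ Finset.mem_singleton_self l0
        obtain ⟨hl0S, hl0Ψ⟩ := Finset.mem_filter.mp hl0T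
        have hcl0 : c l0 ≠ 0 := (Finset.mem_filter.mp hl0S).2
        have honly : ∀ m : Φpos, m ≠ l0 → c m ≠ 0 → (m : E) ∈ Ψ := by
          intro m hm hcm
          by_contra h
          have : m ∈ T := Finset.mem_filter.mpr
            ⟨Finset.mem_filter.mpr ⟨Finset.mem_univ _, hcm⟩, h⟩
          rw [hl0] at this
          exact hm (Finset.mem_singleton.mp this)
        have hsum : c l0 • (l0 : E) = - ∑ m ∈ Finset.univ.erase l0, c m • (m : E) := by
          have := Finset.add_sum_erase Finset.univ (fun m : Φpos => c m • (m : E))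
            (Finset.mem_univ l0)
          rw [hc] at this
          exact eq_neg_of_add_eq_zero_left this
        have hmem : (l0 : E) ∈ Submodule.span ℚ Ψ := by
          have h1 : (l0 : E) = (c l0)⁻¹ • (c l0 • (l0 : E)) := by
            rw [smul_smul, inv_mul_cancel₀ hcl0, one_smul]
          rw [h1, hsum]
          apply Submodule.smul_mem
          apply Submodule.neg_mem
          apply Submodule.sum_mem
          intro m hm
          by_cases hcm : c m = 0
          · rw [hcm, zero_smul]; exact Submodule.zero_mem _
          · exact Submodule.smul_mem _ _
              (Submodule.subset_span (honly m (Finset.ne_of_mem_erase hm) hcm))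
        exact hl0Ψ (keyA _ ((hpos _).mp l0.2).1 hmem)
      · -- at least two roots outside Ψ: every term vanishes
        have hT2 : 1 < T.card := by
          have h0' : T.card ≠ 0 := by simpa [Finset.card_eq_zero] using hT0
          omega
        apply Finset.sum_eq_zero
        intro l hl
        obtain ⟨m, hmT, hml⟩ := Finset.exists_mem_ne hT2 l
        have hmS : m ∈ (Finset.univ.filter fun m : Φpos => c m ≠ 0).erase l :=
          Finset.mem_erase.mpr ⟨hml, (Finset.mem_filter.mp hmT).1⟩
        have hfst : (coordP1 (strMap Φpos Ψ t m)).1 = 0 := by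
          have : strMap Φpos Ψ t m = OnePoint.infty := by
            simp only [strMap, dif_neg (Finset.mem_filter.mp hmT).2]
          rw [this]; rfl
        rw [Finset.prod_eq_zero hmS hfst, mul_zero]
  -- sign lemma
  have hposneg : ∀ ψ : E, ψ ∈ Ψ → ψ ∉ Φpos → -ψ ∈ Φpos := by
    intro ψ hψ hp
    have hψΦ : ψ ∈ Φ := hΨΦ hψ
    rw [hpos]
    refine ⟨hneg _ hψΦ, ?_⟩
    rw [map_neg]
    rcases lt_or_gt_of_ne (hℓ ψ hψΦ) with h | h
    · linarith
    · exact absurd ((hpos ψ).mpr ⟨hψΦ, h⟩) hp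
  -- span of the positive part of Ψ is the span of Ψ
  have spanPos : Submodule.span ℚ (Ψ ∩ (Φpos : Set E)) = Submodule.span ℚ Ψ := by
    apply le_antisymm (Submodule.span_mono Set.inter_subset_left)
    rw [Submodule.span_le]
    intro ψ hψ
    by_cases hp : ψ ∈ Φpos
    · exact Submodule.subset_span ⟨hψ, hp⟩
    · have : -ψ ∈ Submodule.span ℚ (Ψ ∩ (Φpos : Set E)) :=
        Submodule.subset_span ⟨hΨneg _ hψ, hposneg ψ hψ hp⟩
      simpa using Submodule.neg_mem _ this
  -- Part 2: injectivity
  have part2 : Function.Injective (strMap Φpos Ψ) := by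
    intro t t' h
    have hagreePos : ∀ y : Submodule.span ℚ Ψ, (y : E) ∈ Ψ → (y : E) ∈ Φpos →
        t y = t' y := by
      intro y hy hyp
      have h1 := congrFun h (⟨(y : E), hyp⟩ : Φpos)
      simp only [strMap, dif_pos hy] at h1
      have h2 := OnePoint.coe_eq_coe.mp h1
      have h3 : (⟨(((⟨(y : E), hyp⟩ : Φpos)) : E), Submodule.subset_span hy⟩ :
          Submodule.span ℚ Ψ) = y := Subtype.ext rfl
      rwa [h3] at h2
    apply LinearMap.ext_on (Submodule.span_span_coe_preimage (R := ℚ) (s := Ψ))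
    intro y hy
    have hy' : (y : E) ∈ Ψ := hy
    by_cases hyp : (y : E) ∈ Φpos
    · exact hagreePos y hy' hyp
    · have h1 : ((-y : Submodule.span ℚ Ψ) : E) ∈ Ψ := by
        rw [Submodule.coe_neg]
        exact hΨneg _ hy'
      have h2 : ((-y : Submodule.span ℚ Ψ) : E) ∈ Φpos := by
        rw [Submodule.coe_neg]
        exact hposneg _ hy' hyp
      have h3 := hagreePos (-y) h1 h2
      rw [map_neg, map_neg, neg_inj] at h3
      exact h3
  -- finSet of strMap
  have hFinStr : ∀ t, finSet Φpos (strMap Φpos Ψ t) = Ψ ∩ (Φpos : Set E) := by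
    intro t
    ext a
    simp only [finSet, Set.mem_setOf_eq, Set.mem_inter_iff, Finset.mem_coe]
    constructor
    · rintro ⟨h, hne⟩
      refine ⟨?_, h⟩
      by_contra hmem
      apply hne
      simp only [strMap, dif_neg hmem]
    · rintro ⟨h1, h2⟩
      refine ⟨h2, ?_⟩
      simp only [strMap, dif_pos h1]
      exact OnePoint.coe_ne_infty _
  refine ⟨part1, part2, ?_⟩
  apply Set.eq_of_subset_of_subset
  · rintro _ ⟨t, rfl⟩
    exact ⟨part1 t, hFinStr t⟩
  · rintro x ⟨hxZ, hxFin⟩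
    have hx_infty : ∀ l : Φpos, ((l : E) ∈ Ψ ↔ x l ≠ OnePoint.infty) := by
      intro l
      have h1 : (l : E) ∈ finSet Φpos x ↔ (l : E) ∈ Ψ ∩ (Φpos : Set E) := by rw [hxFin]
      simp only [finSet, Set.mem_setOf_eq, Set.mem_inter_iff, Finset.mem_coe] at h1
      constructor
      · intro hl
        obtain ⟨hm, hne⟩ := h1.mpr ⟨hl, l.2⟩
        rwa [Subtype.coe_eta] at hne
      · intro hne
        exact (h1.mp ⟨l.2, by rwa [Subtype.coe_eta]⟩).1
    set M := Submodule.span ℚ Ψ with hM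
    set sP : Set M := ((↑) : M → E) ⁻¹' (Ψ ∩ (Φpos : Set E)) with hsP
    have hspan_sP : Submodule.span ℚ sP = ⊤ := by
      apply Submodule.map_injective_of_injective (Submodule.injective_subtype M)
      rw [Submodule.map_span, Submodule.map_subtype_top]
      have himg : M.subtype '' sP = Ψ ∩ (Φpos : Set E) := by
        ext z
        constructor
        · rintro ⟨y, hy, rfl⟩; exact hy
        · intro hz
          exact ⟨⟨z, Submodule.subset_span hz.1⟩, hz, rfl⟩
      rw [himg, spanPos]
    obtain ⟨b, hb_sub, hb_span, hb_li⟩ := exists_linearIndependent ℚ sP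
    have hb_top : ⊤ ≤ Submodule.span ℚ (Set.range ((↑) : b → M)) := by
      rw [Subtype.range_coe, hb_span, hspan_sP]
    set B : Module.Basis b ℚ M := Module.Basis.mk hb_li hb_top with hB
    haveI : Fintype b := by
      apply Set.Finite.fintype
      apply Set.Finite.subset _ hb_sub
      exact Set.Finite.preimage (Subtype.coe_injective.injOn)
        (Φpos.finite_toSet.inter_of_right Ψ)
    set v : Φpos → ℂ := fun m => (coordP1 (x m)).2 with hv
    have he_mem : ∀ i : b, ((i : M) : E) ∈ Ψ ∧ ((i : M) : E) ∈ Φpos := fun i => hb_sub i.2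
    set e : b → Φpos := fun i => ⟨((i : M) : E), (he_mem i).2⟩ with he
    set t : M →ₗ[ℚ] ℂ := B.constr ℚ (fun i => v (e i)) with ht
    have hval : ∀ (l : Φpos) (hl : (l : E) ∈ Ψ),
        t ⟨(l : E), Submodule.subset_span hl⟩ = v l := by
      intro l hl
      set y : M := ⟨(l : E), Submodule.subset_span hl⟩ with hy
      set r : b → ℚ := fun i => B.repr y i with hr
      set cc : Φpos → ℚ :=
        fun m => (if m = l then 1 else 0) - ∑ i : b, if e i = m then r i else 0 with hcc
      have hrel : ∑ m : Φpos, cc m • (m : E) = 0 := by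
        have h1 : ∑ m : Φpos, cc m • (m : E)
            = (∑ m : Φpos, (if m = l then (1 : ℚ) else 0) • (m : E))
              - ∑ m : Φpos, (∑ i : b, if e i = m then r i else 0) • (m : E) := by
          rw [← Finset.sum_sub_distrib]
          exact Finset.sum_congr rfl fun m _ => by rw [hcc, sub_smul]
        rw [h1]
        have h2 : (∑ m : Φpos, (if m = l then (1 : ℚ) else 0) • (m : E)) = (l : E) := by
          have hh : ∀ m : Φpos, (if m = l then (1 : ℚ) else 0) • (m : E)
              = if m = l then (m : E) else 0 := by
            intro m; split <;> simp
          rw [Finset.sum_congr rfl fun m _ => hh m,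
            Finset.sum_ite_eq' Finset.univ l fun m : Φpos => (m : E)]
          simp
        have h3 : (∑ m : Φpos, (∑ i : b, if e i = m then r i else 0) • (m : E)) = (l : E) := by
          have hstep : ∀ m : Φpos, (∑ i : b, if e i = m then r i else 0) • (m : E)
              = ∑ i : b, (if e i = m then r i • (((e i : Φpos)) : E) else 0) := by
            intro m
            rw [Finset.sum_smul]
            apply Finset.sum_congr rfl
            intro i _
            by_cases hei : e i = m
            · rw [if_pos hei, if_pos hei, hei]
            · rw [if_neg hei, if_neg hei, zero_smul]
          rw [Finset.sum_congr rfl fun m _ => hstep m, Finset.sum_comm]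
          have h4 : ∀ i : b, (∑ m : Φpos, if e i = m then r i • (((e i : Φpos)) : E) else 0)
              = r i • (((e i : Φpos)) : E) := by
            intro i
            rw [Finset.sum_ite_eq Finset.univ (e i) fun _ : Φpos => r i • (((e i : Φpos)) : E)]
            simp
          rw [Finset.sum_congr rfl fun i _ => h4 i]
          have h5 : ∀ i : b, r i • (((e i : Φpos)) : E) = r i • ((B i : M) : E) := by
            intro i
            congr 1
            rw [hB, Module.Basis.mk_apply]
          rw [Finset.sum_congr rfl fun i _ => h5 i]
          have h6 : (∑ i : b, r i • B i) = y := B.sum_repr y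
          calc ∑ i : b, r i • ((B i : M) : E) = ((∑ i : b, r i • B i : M) : E) := by
                push_cast; rfl
            _ = (y : E) := by rw [h6]
            _ = (l : E) := rfl
        rw [h2, h3, sub_self]
      have hsupp : ∀ m : Φpos, cc m ≠ 0 → x m ≠ OnePoint.infty := by
        intro m hm
        have hmem : (m : E) ∈ Ψ := by
          by_cases h1 : m = l
          · rw [h1]; exact hl
          · by_cases h2 : ∃ i : b, e i = m
            · obtain ⟨i, hi⟩ := h2
              rw [← hi]; exact (he_mem i).1
            · exfalso
              apply hm
              push_neg at h2
              show (if m = l then (1 : ℚ) else 0) - (∑ i : b, if e i = m then r i else 0) = 0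
              rw [if_neg h1, Finset.sum_eq_zero fun i _ => if_neg (h2 i)]
              ring
        exact (hx_infty m).mp hmem
      have hZ := hxZ cc hrel
      rw [sum_finite _ _ _ hsupp] at hZ
      have hvl : (v l : ℂ) = ∑ i : b, (r i : ℂ) * v (e i) := by
        have hexp : ∀ m : Φpos, ((cc m : ℚ) : ℂ) * v m
            = (if m = l then v m else 0)
              - ∑ i : b, (if e i = m then (r i : ℂ) * v m else 0) := by
          intro m
          rw [hcc]
          push_cast
          rw [sub_mul, Finset.sum_mul]
          congr 1
          · split <;> simp
          · exact Finset.sum_congr rfl fun i _ => by split <;> simp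
        rw [Finset.sum_congr rfl fun m _ => hexp m, Finset.sum_sub_distrib,
          Finset.sum_ite_eq' Finset.univ l v, Finset.sum_comm] at hZ
        have h7 : ∀ i : b, (∑ m : Φpos, if e i = m then (r i : ℂ) * v m else 0)
            = (r i : ℂ) * v (e i) := by
          intro i
          rw [Finset.sum_ite_eq Finset.univ (e i) fun m : Φpos => (r i : ℂ) * v m]
          simp
        rw [Finset.sum_congr rfl fun i _ => h7 i] at hZ
        simp only [Finset.mem_univ, if_true] at hZ
        rw [sub_eq_zero] at hZ
        exact hZ
      have hty : t y = ∑ i : b, (r i : ℂ) * v (e i) := by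
        conv_lhs => rw [← B.sum_repr y]
        rw [map_sum]
        apply Finset.sum_congr rfl
        intro i _
        rw [map_smul, Rat.smul_def, ht, Module.Basis.constr_basis]
      rw [hty, ← hvl]
    refine ⟨t, ?_⟩
    funext l
    by_cases hl : (l : E) ∈ Ψ
    · have h1 : strMap Φpos Ψ t l
          = ((t ⟨(l : E), Submodule.subset_span hl⟩ : ℂ) : OnePoint ℂ) := by
        simp only [strMap, dif_pos hl]
      rw [h1, hval l hl]
      exact coordP1_snd_of_ne ((hx_infty l).mp hl)
    · have h1 : strMap Φpos Ψ t l = OnePoint.infty := by simp only [strMap, dif_neg hl]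
      rw [h1]
      by_contra hne
      exact hl ((hx_infty l).mpr fun h => hne h.symm)
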